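/- Let n > 17 be an integer with n ≡ 3 (mod 6) or n ≡ 2 (mod 3), and let C be a locating-dominating code in C_n(1,3) such that C contains no occurrence of the pattern S3 (i.e., there is no vertex u with u−7, u−6, u−1, u, u+5, u+6 ∈ C and u−5, u−4, u−3, u−2, u+1, u+2, u+3, u+4 ∉ C). Then |C| > ⌈n/3⌉. -/

import Mathlib

/-- Closed neighbourhood of `u` in the circulant graph `C_n(1,3)`. -/
def nbhd {n : ℕ} (u : ZMod n) : Finset (ZMod n) := {u - 3, u - 1, u, u + 1, u + 3}

/-- Identifying set `I(C;u) = N[u] ∩ C`. -/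
def iset {n : ℕ} (C : Finset (ZMod n)) (u : ZMod n) : Finset (ZMod n) := nbhd u ∩ C

/-- `C` is an identifying code in `C_n(1,3)`. -/
def IsIdentifying {n : ℕ} (C : Finset (ZMod n)) : Prop :=
  (∀ u : ZMod n, (iset C u).Nonempty) ∧
    ∀ u v : ZMod n, u ≠ v → iset C u ≠ iset C v

/-- `C` is a locating-dominating code in `C_n(1,3)`. -/
def IsLocDom {n : ℕ} (C : Finset (ZMod n)) : Prop :=
  (∀ u : ZMod n, (iset C u).Nonempty) ∧
    ∀ u v : ZMod n, u ∉ C → v ∉ C → u ≠ v → iset C u ≠ iset C v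

/-! ### Finite certificate -/

def nos3_TBL : Nat := 0x90fe42a78d9515669d521365448090fe43378d99ad669d821365490c90fe42a78f151e669d5214278f1890fe43378f19ad669d8214e7909890fe42a78d9515669d9a73654c0990fe43378d99ad78b5e2a552124890fe42a78f151e669d9a7427909890fe43378f19ad78cde2a5b2124890fe42a78d9515669d521365448090fe43390fdb33669d8214e90d9590fe42a78f151e669d5214278f1891224399121b3672d982160c109890fe42a78d9515669d9a73654c0990fe43390fdb3378b5e2a5b2124890fe42a78f151e669d9a74279098912243f9121b3678e5e2a612124890fe42a78d9515669d521365448090fe43378d99ad669d821365490c90fe42a78f151e67215484320f4890fe43378f19ad67218484f210c890fe42a78d9515669d9a73654c0990fe43378d99ad78b5e2a552124890fe43378f152467219c843210c8911644278f19ad7921e485b2124890fe42a78d9515669d521365448090fe43390fdb33669d8214e90d9590fe42a78f151e67215484320f4891224399121b36732184861210c890fe42a78d9515669d9a73654c0990fe43390fdb3378b5e2a5b2124890fe43378f153067219c843210c891224459121b367921e48612244890fe42a78d9515669d521365448090fe43378d99ad669d821365490c90fe42a78f151e669d5214278f1890fe43378f19ad669d8214e7909890fe42a78d9515669d9a7365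4c0990fe44878da44878b6448552244890fe42a78f151e669d9a7427909890fe44878f244878ce4485b2244890fe42a78d9515669d521365448090fe43390fdb33669d8214e90d9590fe42a78f151e669d5214278f1891224399121b3672d982160c109890fe42a78d981e669d9a73654d8f90fe44890fe44878b64485b2244890fe43078f182d669d9a742790989122448912244878e6448612244890fe42a78d9515669d521365448090fe43378d99ad669d821365490c90fe42a78f151e67215484320f4890fe43378f19ad67218484f210c890fe42a78d9515669d9a73654c0990fe44878da44878b6448552244890fe43378f152467219c843210c8911644878f244879224485b2244890fe42a78d9515669d521365448090fe43390fdb33669d8214e90d9590fe42a78f151e67215484320f4891224399121b36732184861210c890fe42a78d981e669d9a73654dc890fe44890fe44878b64485b2244890fe43978f183067219c843210c8912244891224487922448912244890fe42a78d9515669d521365448090fe43378d99ad669d821365490c90fe42a78f151e669d5214278f1890fe43378f19ad669d8214e7909890fe42a78d9515669d9a73654c0990fe43378d99ad78b5e2a552124890fe42a78f151e669d9a7427909890fe43378f19ad78cde2a5b2124890fe42a78d9515669d521365448090fe43390fdb33669d8214e90d9590fe42a9122448669d52191224489122439912244872d9821912244890fe42a78d9515669d9a73654c0990fe43390fdb3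378b5e2a5b2124890fe42a9122448669d9a79122448912243f912244878e5e2a912244890fe42a78d9515669d521365448090fe43378d99ad669d821365490c90fe42a78f151e67215484320f4890fe43378f19ad67218484f210c890fe42a78d9515669d9a73654c0990fe43378d99ad78b5e2a552124890fe43378f152467219c843210c8911644278f19ad7921e485b2124890fe42a78d9515669d52137204c890fe43390fdb33669d8214f20dc890fe42a912244867215489122448912243991224487321848912244890fe42a78d951b669d9a73720c4890fe43390fdb3378b5e2a5b2124890fe433912244867219c89122448912244591224487922448912244890fe42a78d9515669d521365448090fe43378d99ad669d821365490c90fe42a78f151e669d5214278f1890fe43378f19ad669d8214e7909890fe42a78d9515669d9a73654c0990fe44878da44878b6448552244890fe42a78f151e669d9a7427909890fe44878f244878ce4485b2244890fe42a78d9515669d521365448090fe43390fdb33669d8214e90d9590fe42a9122448669d52191224489122439912244872d9821912244890fe42a78d981e669d9a73654d8f90fe44890fe44878b64485b2244890fe4309122448669d9a791224489122448912244878e6448912244890fe42a78d9515669d521365448090fe43378d99ad669d821365490c90fe42a78f151e67215484320f4890fe43378f19ad67218484f210c890fe42a78d9515669d9a73654c0990fe44878da44878b6448552244890fe43378f1524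67219c843210c8911644878f244879224485b2244890fe42a78d9515669d52137204c890fe43390fdb33669d8214f20dc890fe42a912244867215489122448912243991224487321848912244890fe42a78d9824669d9a73720dc890fe44890fe44878b64485b2244890fe439912244867219c89122448912244891224489122448912244890fe42a78d9515669d521365448090fe43378d99ad669d821365490c90fe42a78f151e669d5214278f1890fe43378f19ad669d8214e7909890fe42a78d9515669d9a73654c0990fe43378d99ad78b5e2a552124890fe42a78f151e669d9a7427909890fe43378f19ad78cde2a5b2124890fe42a78d9515669d521365448090fe43390fdb33669d8214e90d9590fe42a78f151e669d5214278f1891224399121b3672d982160c109890fe42a78d9515669d9a73654c0990fe43390fdb3378b5e2a5b2124890fe42a78f151e669d9a74279098912243f9121b3678e5e2a612124890fe42a78d9515669d521365448090fe43378d99ad669d821365490c90fe42a78f151e67215484320f4890fe43378f19ad67218484f210c890fe42a78d95159122448912244890fe43378d99ad9122448912244890fe43378f152491224489122448911644278f19ad9122448912244890fe42a78d9515669d521365448090fe43390fdb33669d8214e90d9590fe42a78f151e67215484320f4891224399121b36732184861210c890fe42a78d95159122448912244890fe43390fdb339122448912244890fe43378f15309122448912244891224459121b369122448912244890fe42a7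8d9515669d521365448090fe43378d99ad669d821365490c90fe42a78f151e669d5214278f1890fe43378f19ad669d8214e7909890fe42a78d9515669d9a73654c0990fe44878da44878b6448552244890fe42a78f151e669d9a7427909890fe44878f244878ce4485b2244890fe42a78d9515669d521365448090fe43390fdb33669d8214e90d9590fe42a78f151e669d5214278f1891224399121b3672d982160c109890fe42a78d981e669d9a73654d8f90fe44890fe44878b64485b2244890fe43078f182d669d9a742790989122448912244878e6448612244890fe42a78d9515669d521365448090fe43378d99ad669e448365644890fe42a78f151e67215484320f4890fe43378f19ad67224484f2244890fe42a78d95159122448912244890fe44878da4489122448912244890fe43378f152491224489122448911644878f24489122448912244890fe42a78d9515669d521365478690fe43390fdb33669e4484e9244890fe42a78f151e67215484320f4891224399121b367322448612244890fe42a78d981e9122448912244890fe44890fe4489122448912244890fe43978f183091224489122448912244891224489122448912244890fe42a78d9515669d521365448090fe43378d99ad669d821365490c90fe42a78f151e669d5214278f1890fe43378f19ad669d8214e7909890fe42a78d9515669d9a73654c0990fe43378d99ad78b5e2a552124890fe42a78f151e669d9a7427909890fe43378f19ad78cde2a5b2124890fe42a78d9515669d521365448090fe43390fdb33669d8214e9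0d9590fe42a9122448669d52191224489122439912244872d9821912244890fe42a78d9515669d9a73654c0990fe43390fdb3378b5e2a5b2124890fe42a9122448669d9a79122448912243f912244878e5e2a912244890fe42a78d9515669d521365448090fe43378d99ad669d821365490c90fe42a78f151e67215484320f4890fe43378f19ad67218484f210c890fe42a78d95159122448912244890fe43378d99ad9122448912244890fe43378f152491224489122448911644278f19ad9122448912244890fe42a78d9515669d52137204c890fe43390fdb33669d8214f20dc890fe42a912244867215489122448912243991224487321848912244890fe42a78d951b9122448912244890fe43390fdb339122448912244890fe433912244891224489122448912244591224489122448912244890fe42a78d9515669d521365448090fe43378d99ad669d821365490c90fe42a78f151e669d5214278f1890fe43378f19ad669d8214e7909890fe42a78d9515669d9a73654c0990fe44878da44878b6448552244890fe42a78f151e669d9a7427909890fe44878f244878ce4485b2244890fe42a78d9515669d521365448090fe43390fdb33669d8214e90d9590fe42a9122448669d52191224489122439912244872d9821912244890fe42a78d981e669d9a73654d8f90fe44890fe44878b64485b2244890fe4309122448669d9a791224489122448912244878e6448912244890fe42a78d9515669d521365448090fe43378d99ad669e448365644890fe42a78f151e67215484320f4890fe43378f19ad67224484f2244890fe42a78d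95159122448912244890fe44878da4489122448912244890fe43378f152491224489122448911644878f24489122448912244890fe42a78d9515669d52137207c890fe43390fdb33669e4484f2244890fe42a912244867215489122448912243991224487322448912244890fe42a78d98249122448912244890fe44890fe4489122448912244890fe4399122448912244891224489122448912244891224489122448

def nos3_psi (x : Nat) : Nat := Nat.land (Nat.shiftRight nos3_TBL (Nat.mul 7 x)) 127

def nos3_ineqE (e : Nat) : Bool :=
  Nat.ble (Nat.add (nos3_psi (Nat.shiftRight e 1)) 12)
    (Nat.add (nos3_psi (Nat.land e 4095)) (Nat.mul 33 (Nat.land (Nat.shiftRight e 4) 1)))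

def nos3_viol (m : Nat) : Bool := Nat.beq (Nat.land m 1188) 0 || Nat.beq (Nat.land m 9504) 0 || Nat.beq (Nat.land m 2376) 0 || Nat.beq (Nat.land m 4752) 0 || Nat.beq (Nat.land m 372) 0 || Nat.beq (Nat.land m 11368) 0 || Nat.beq (Nat.land m 5684) 0 || Nat.beq (Nat.land m 297) 0 || Nat.beq (Nat.land m 11834) 0 || Nat.beq (Nat.land m 4080) 0 || Nat.beq (Nat.land m 8160) 0 || Nat.beq (Nat.land m 2040) 0 || Nat.beq (Nat.land m 6120) 0 || Nat.beq (Nat.land m 2842) 0 || (Nat.beq (Nat.land m 12483) 12483 && Nat.beq (Nat.land m 3900) 0)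

def nos3_blockCheck (e : Nat) : Bool := nos3_ineqE (Nat.shiftRight e 1) || nos3_viol e

def nos3_go : Nat → Nat → Bool
  | 0, lo => nos3_blockCheck lo
  | d+1, lo => nos3_go d lo && nos3_go d (Nat.add lo (Nat.shiftLeft 1 d))

set_option maxRecDepth 100000 in
theorem nos3_goTrue : nos3_go 14 0 = true := by decide +kernel

theorem nos3_go_spec : ∀ d lo, nos3_go d lo = true → ∀ i, i < 2^d → nos3_blockCheck (lo + i) = true := by
  intro d
  induction d with
  | zero =>
    intro lo h i hi
    have : i = 0 := by omega
    subst this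
    simpa [nos3_go] using h
  | succ d ih =>
    intro lo h i hi
    rw [show nos3_go (d+1) lo = (nos3_go d lo && nos3_go d (Nat.add lo (Nat.shiftLeft 1 d))) from rfl] at h
    have h2 := Bool.and_eq_true_iff.mp h
    by_cases hc : i < 2^d
    · exact ih lo h2.1 i hc
    · have hsl : Nat.shiftLeft 1 d = 2^d := Nat.one_shiftLeft d
      have h3 := ih (Nat.add lo (Nat.shiftLeft 1 d)) h2.2 (i - 2^d) (by omega)
      have he : Nat.add lo (Nat.shiftLeft 1 d) + (i - 2^d) = lo + i := by
        rw [hsl]; simp only [Nat.add_eq]; have := Nat.pow_pos (n := d) (show 0 < 2 by omega); omega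
      rwa [he] at h3

theorem nos3_blockCheck_all (e : ℕ) (he : e < 2^14) : nos3_blockCheck e = true := by
  simpa using nos3_go_spec 14 0 nos3_goTrue e he


theorem nos3_tb_land (a b k : ℕ) : Nat.testBit (Nat.land a b) k = (Nat.testBit a k && Nat.testBit b k) :=
  Nat.testBit_land a b k

theorem nos3_tb_shr (x i j : ℕ) : Nat.testBit (Nat.shiftRight x i) j = Nat.testBit x (i+j) :=
  Nat.testBit_shiftRight x

theorem nos3_shr_div (m k : ℕ) : Nat.shiftRight m k = m / 2^k :=
  Nat.shiftRight_eq_div_pow m k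

theorem nos3_land_one (x : ℕ) : Nat.land x 1 = x % 2 :=
  Nat.and_one_is_mod x

/-! ### Bit vectors from the code -/


def nos3_wrec (f : ℕ → Bool) : ℕ → ℕ
  | 0 => 0
  | k+1 => (cond (f 0) 1 0) + 2 * nos3_wrec (fun i => f (i+1)) k

theorem nos3_wrec_lt (f : ℕ → Bool) (k : ℕ) : nos3_wrec f k < 2^k := by
  induction k generalizing f with
  | zero => simp [nos3_wrec]
  | succ k ih =>
    have h := ih (fun i => f (i+1))
    have : nos3_wrec f (k+1) = (cond (f 0) 1 0) + 2 * nos3_wrec (fun i => f (i+1)) k := rfl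
    rw [this, pow_succ]
    cases f 0 <;> simp <;> omega

theorem nos3_wrec_testBit (k : ℕ) (f : ℕ → Bool) (j : ℕ) :
    Nat.testBit (nos3_wrec f k) j = (decide (j < k) && f j) := by
  induction k generalizing f j with
  | zero => simp [nos3_wrec]
  | succ k ih =>
    have hw : nos3_wrec f (k+1) = (cond (f 0) 1 0) + 2 * nos3_wrec (fun i => f (i+1)) k := rfl
    cases j with
    | zero =>
      rw [hw, Nat.testBit_zero]
      cases hf : f 0
      · simp only [cond_false, Bool.and_false, zero_add, decide_eq_false_iff_not]
        omega
      · simp only [cond_true, Bool.and_true]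
        rw [decide_eq_true (show (1 + 2 * nos3_wrec (fun i => f (i+1)) k) % 2 = 1 by omega),
          decide_eq_true (show 0 < k + 1 by omega)]
    | succ j =>
      rw [hw, Nat.testBit_add_one,
        show ((cond (f 0) 1 0) + 2 * nos3_wrec (fun i => f (i+1)) k) / 2
            = nos3_wrec (fun i => f (i+1)) k by cases f 0 <;> simp <;> omega,
        ih]
      simp [Nat.add_lt_add_iff_right]

def vtx {n : ℕ} (u : ZMod n) (j : ℕ) : ZMod n := u + (j : ZMod n) - 8

def nos3_W {n : ℕ} (C : Finset (ZMod n)) (u : ZMod n) : ℕ :=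
  nos3_wrec (fun j => decide (vtx u j ∈ C)) 17

theorem nos3_W_lt {n : ℕ} (C : Finset (ZMod n)) (u : ZMod n) : nos3_W C u < 2^17 :=
  nos3_wrec_lt _ 17

theorem nos3_W_bit {n : ℕ} (C : Finset (ZMod n)) (u : ZMod n) (j : ℕ) (hj : j < 17) :
    Nat.testBit (nos3_W C u) j = decide (vtx u j ∈ C) := by
  rw [nos3_W, nos3_wrec_testBit]
  simp [hj]

theorem nos3_hnot {n : ℕ} (C : Finset (ZMod n)) (u : ZMod n) (M : ℕ)
    (h : Nat.land (Nat.shiftRight (nos3_W C u) 3) M = 0) (j : ℕ) (hj : j < 14)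
    (hb : Nat.testBit M j = true) : vtx u (3+j) ∉ C := by
  have h1 : Nat.testBit (Nat.land (Nat.shiftRight (nos3_W C u) 3) M) j = false := by
    rw [h]; exact Nat.zero_testBit j
  rw [nos3_tb_land, hb, Bool.and_true, nos3_tb_shr,
    nos3_W_bit C u (3+j) (by omega)] at h1
  exact of_decide_eq_false h1

theorem nos3_hyes {n : ℕ} (C : Finset (ZMod n)) (u : ZMod n) (M : ℕ)
    (h : Nat.land (Nat.shiftRight (nos3_W C u) 3) M = M) (j : ℕ) (hj : j < 14)
    (hb : Nat.testBit M j = true) : vtx u (3+j) ∈ C := by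
  have h1 : Nat.testBit (Nat.land (Nat.shiftRight (nos3_W C u) 3) M) j = true := by
    rw [h]; exact hb
  rw [nos3_tb_land, hb, Bool.and_true, nos3_tb_shr,
    nos3_W_bit C u (3+j) (by omega)] at h1
  exact of_decide_eq_true h1

theorem nos3_mem_nbhd {n : ℕ} (C : Finset (ZMod n)) (u : ZMod n) (a p1 p2 p4 p5 : ℕ)
    (h1 : p1 + 3 = a) (h2 : p2 + 1 = a) (h4 : a + 1 = p4) (h5 : a + 3 = p5) :
    ∀ t : ZMod n, t ∈ nbhd (vtx u a) ↔
      t = vtx u p1 ∨ t = vtx u p2 ∨ t = vtx u a ∨ t = vtx u p4 ∨ t = vtx u p5 := by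
  intro t
  have e1 : vtx u a - 3 = vtx u p1 := by unfold vtx; rw [← h1]; push_cast; ring
  have e2 : vtx u a - 1 = vtx u p2 := by unfold vtx; rw [← h2]; push_cast; ring
  have e4 : vtx u a + 1 = vtx u p4 := by unfold vtx; rw [← h4]; push_cast; ring
  have e5 : vtx u a + 3 = vtx u p5 := by unfold vtx; rw [← h5]; push_cast; ring
  simp only [nbhd, Finset.mem_insert, Finset.mem_singleton, e1, e2, e4, e5]

theorem nos3_vne {n : ℕ} (C : Finset (ZMod n)) (u : ZMod n) (hn : 17 < n) (a c : ℕ)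
    (hac : a < c) (hc : c ≤ 16) : vtx u a ≠ vtx u c := by
  intro h
  have h2 : (a : ZMod n) = (c : ZMod n) := by
    unfold vtx at h
    have h3 : u + (a : ZMod n) = u + (c : ZMod n) := by
      have := sub_left_inj.mp h
      exact this
    exact add_left_cancel h3
  have h4 : ((c - a : ℕ) : ZMod n) = 0 := by
    rw [Nat.cast_sub (le_of_lt hac), h2, sub_self]
  rw [ZMod.natCast_eq_zero_iff] at h4
  have h5 := Nat.le_of_dvd (by omega) h4
  omega

theorem nos3_cond0 {n : ℕ} (C : Finset (ZMod n)) (u : ZMod n) (hn : 17 < n) (hC : IsLocDom C)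
    (h : Nat.land (Nat.shiftRight (nos3_W C u) 3) 1188 = 0) : False := by
  have f5 : vtx u 5 ∉ C := nos3_hnot C u 1188 h 2 (by omega) (by decide)
  have f8 : vtx u 8 ∉ C := nos3_hnot C u 1188 h 5 (by omega) (by decide)
  have f10 : vtx u 10 ∉ C := nos3_hnot C u 1188 h 7 (by omega) (by decide)
  have f13 : vtx u 13 ∉ C := nos3_hnot C u 1188 h 10 (by omega) (by decide)
  have mA : ∀ t : ZMod n, t ∈ nbhd (vtx u 8) ↔ t = vtx u 5 ∨ t = vtx u 7 ∨ t = vtx u 8 ∨ t = vtx u 9 ∨ t = vtx u 11 := nos3_mem_nbhd C u 8 5 7 9 11 (by omega) (by omega) (by omega) (by omega)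
  have mB : ∀ t : ZMod n, t ∈ nbhd (vtx u 10) ↔ t = vtx u 7 ∨ t = vtx u 9 ∨ t = vtx u 10 ∨ t = vtx u 11 ∨ t = vtx u 13 := nos3_mem_nbhd C u 10 7 9 11 13 (by omega) (by omega) (by omega) (by omega)
  apply hC.2 (vtx u 8) (vtx u 10) f8 f10 (nos3_vne C u hn 8 10 (by omega) (by omega))
  show iset C (vtx u 8) = iset C (vtx u 10)
  apply Finset.ext; intro t
  simp only [iset, Finset.mem_inter]
  rw [mA t, mB t]
  constructor
  · rintro ⟨hd, htC⟩
    refine ⟨?_, htC⟩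
    rcases hd with rfl|rfl|rfl|rfl|rfl
    · exact absurd htC f5
    · exact Or.inl rfl
    · exact absurd htC f8
    · exact Or.inr (Or.inl rfl)
    · exact Or.inr (Or.inr (Or.inr (Or.inl rfl)))
  · rintro ⟨hd, htC⟩
    refine ⟨?_, htC⟩
    rcases hd with rfl|rfl|rfl|rfl|rfl
    · exact Or.inr (Or.inl rfl)
    · exact Or.inr (Or.inr (Or.inr (Or.inl rfl)))
    · exact absurd htC f10
    · exact Or.inr (Or.inr (Or.inr (Or.inr rfl)))
    · exact absurd htC f13

theorem nos3_cond1 {n : ℕ} (C : Finset (ZMod n)) (u : ZMod n) (hn : 17 < n) (hC : IsLocDom C)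
    (h : Nat.land (Nat.shiftRight (nos3_W C u) 3) 9504 = 0) : False := by
  have f8 : vtx u 8 ∉ C := nos3_hnot C u 9504 h 5 (by omega) (by decide)
  have f11 : vtx u 11 ∉ C := nos3_hnot C u 9504 h 8 (by omega) (by decide)
  have f13 : vtx u 13 ∉ C := nos3_hnot C u 9504 h 10 (by omega) (by decide)
  have f16 : vtx u 16 ∉ C := nos3_hnot C u 9504 h 13 (by omega) (by decide)
  have mA : ∀ t : ZMod n, t ∈ nbhd (vtx u 11) ↔ t = vtx u 8 ∨ t = vtx u 10 ∨ t = vtx u 11 ∨ t = vtx u 12 ∨ t = vtx u 14 := nos3_mem_nbhd C u 11 8 10 12 14 (by omega) (by omega) (by omega) (by omega)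
  have mB : ∀ t : ZMod n, t ∈ nbhd (vtx u 13) ↔ t = vtx u 10 ∨ t = vtx u 12 ∨ t = vtx u 13 ∨ t = vtx u 14 ∨ t = vtx u 16 := nos3_mem_nbhd C u 13 10 12 14 16 (by omega) (by omega) (by omega) (by omega)
  apply hC.2 (vtx u 11) (vtx u 13) f11 f13 (nos3_vne C u hn 11 13 (by omega) (by omega))
  show iset C (vtx u 11) = iset C (vtx u 13)
  apply Finset.ext; intro t
  simp only [iset, Finset.mem_inter]
  rw [mA t, mB t]
  constructor
  · rintro ⟨hd, htC⟩
    refine ⟨?_, htC⟩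
    rcases hd with rfl|rfl|rfl|rfl|rfl
    · exact absurd htC f8
    · exact Or.inl rfl
    · exact absurd htC f11
    · exact Or.inr (Or.inl rfl)
    · exact Or.inr (Or.inr (Or.inr (Or.inl rfl)))
  · rintro ⟨hd, htC⟩
    refine ⟨?_, htC⟩
    rcases hd with rfl|rfl|rfl|rfl|rfl
    · exact Or.inr (Or.inl rfl)
    · exact Or.inr (Or.inr (Or.inr (Or.inl rfl)))
    · exact absurd htC f13
    · exact Or.inr (Or.inr (Or.inr (Or.inr rfl)))
    · exact absurd htC f16

theorem nos3_cond2 {n : ℕ} (C : Finset (ZMod n)) (u : ZMod n) (hn : 17 < n) (hC : IsLocDom C)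
    (h : Nat.land (Nat.shiftRight (nos3_W C u) 3) 2376 = 0) : False := by
  have f6 : vtx u 6 ∉ C := nos3_hnot C u 2376 h 3 (by omega) (by decide)
  have f9 : vtx u 9 ∉ C := nos3_hnot C u 2376 h 6 (by omega) (by decide)
  have f11 : vtx u 11 ∉ C := nos3_hnot C u 2376 h 8 (by omega) (by decide)
  have f14 : vtx u 14 ∉ C := nos3_hnot C u 2376 h 11 (by omega) (by decide)
  have mA : ∀ t : ZMod n, t ∈ nbhd (vtx u 9) ↔ t = vtx u 6 ∨ t = vtx u 8 ∨ t = vtx u 9 ∨ t = vtx u 10 ∨ t = vtx u 12 := nos3_mem_nbhd C u 9 6 8 10 12 (by omega) (by omega) (by omega) (by omega)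
  have mB : ∀ t : ZMod n, t ∈ nbhd (vtx u 11) ↔ t = vtx u 8 ∨ t = vtx u 10 ∨ t = vtx u 11 ∨ t = vtx u 12 ∨ t = vtx u 14 := nos3_mem_nbhd C u 11 8 10 12 14 (by omega) (by omega) (by omega) (by omega)
  apply hC.2 (vtx u 9) (vtx u 11) f9 f11 (nos3_vne C u hn 9 11 (by omega) (by omega))
  show iset C (vtx u 9) = iset C (vtx u 11)
  apply Finset.ext; intro t
  simp only [iset, Finset.mem_inter]
  rw [mA t, mB t]
  constructor
  · rintro ⟨hd, htC⟩
    refine ⟨?_, htC⟩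
    rcases hd with rfl|rfl|rfl|rfl|rfl
    · exact absurd htC f6
    · exact Or.inl rfl
    · exact absurd htC f9
    · exact Or.inr (Or.inl rfl)
    · exact Or.inr (Or.inr (Or.inr (Or.inl rfl)))
  · rintro ⟨hd, htC⟩
    refine ⟨?_, htC⟩
    rcases hd with rfl|rfl|rfl|rfl|rfl
    · exact Or.inr (Or.inl rfl)
    · exact Or.inr (Or.inr (Or.inr (Or.inl rfl)))
    · exact absurd htC f11
    · exact Or.inr (Or.inr (Or.inr (Or.inr rfl)))
    · exact absurd htC f14

theorem nos3_cond3 {n : ℕ} (C : Finset (ZMod n)) (u : ZMod n) (hn : 17 < n) (hC : IsLocDom C)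
    (h : Nat.land (Nat.shiftRight (nos3_W C u) 3) 4752 = 0) : False := by
  have f7 : vtx u 7 ∉ C := nos3_hnot C u 4752 h 4 (by omega) (by decide)
  have f10 : vtx u 10 ∉ C := nos3_hnot C u 4752 h 7 (by omega) (by decide)
  have f12 : vtx u 12 ∉ C := nos3_hnot C u 4752 h 9 (by omega) (by decide)
  have f15 : vtx u 15 ∉ C := nos3_hnot C u 4752 h 12 (by omega) (by decide)
  have mA : ∀ t : ZMod n, t ∈ nbhd (vtx u 10) ↔ t = vtx u 7 ∨ t = vtx u 9 ∨ t = vtx u 10 ∨ t = vtx u 11 ∨ t = vtx u 13 := nos3_mem_nbhd C u 10 7 9 11 13 (by omega) (by omega) (by omega) (by omega)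
  have mB : ∀ t : ZMod n, t ∈ nbhd (vtx u 12) ↔ t = vtx u 9 ∨ t = vtx u 11 ∨ t = vtx u 12 ∨ t = vtx u 13 ∨ t = vtx u 15 := nos3_mem_nbhd C u 12 9 11 13 15 (by omega) (by omega) (by omega) (by omega)
  apply hC.2 (vtx u 10) (vtx u 12) f10 f12 (nos3_vne C u hn 10 12 (by omega) (by omega))
  show iset C (vtx u 10) = iset C (vtx u 12)
  apply Finset.ext; intro t
  simp only [iset, Finset.mem_inter]
  rw [mA t, mB t]
  constructor
  · rintro ⟨hd, htC⟩
    refine ⟨?_, htC⟩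
    rcases hd with rfl|rfl|rfl|rfl|rfl
    · exact absurd htC f7
    · exact Or.inl rfl
    · exact absurd htC f10
    · exact Or.inr (Or.inl rfl)
    · exact Or.inr (Or.inr (Or.inr (Or.inl rfl)))
  · rintro ⟨hd, htC⟩
    refine ⟨?_, htC⟩
    rcases hd with rfl|rfl|rfl|rfl|rfl
    · exact Or.inr (Or.inl rfl)
    · exact Or.inr (Or.inr (Or.inr (Or.inl rfl)))
    · exact absurd htC f12
    · exact Or.inr (Or.inr (Or.inr (Or.inr rfl)))
    · exact absurd htC f15

theorem nos3_cond4 {n : ℕ} (C : Finset (ZMod n)) (u : ZMod n) (hC : IsLocDom C)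
    (h : Nat.land (Nat.shiftRight (nos3_W C u) 3) 372 = 0) : False := by
  have f5 : vtx u 5 ∉ C := nos3_hnot C u 372 h 2 (by omega) (by decide)
  have f7 : vtx u 7 ∉ C := nos3_hnot C u 372 h 4 (by omega) (by decide)
  have f8 : vtx u 8 ∉ C := nos3_hnot C u 372 h 5 (by omega) (by decide)
  have f9 : vtx u 9 ∉ C := nos3_hnot C u 372 h 6 (by omega) (by decide)
  have f11 : vtx u 11 ∉ C := nos3_hnot C u 372 h 8 (by omega) (by decide)
  have mA : ∀ t : ZMod n, t ∈ nbhd (vtx u 8) ↔ t = vtx u 5 ∨ t = vtx u 7 ∨ t = vtx u 8 ∨ t = vtx u 9 ∨ t = vtx u 11 := nos3_mem_nbhd C u 8 5 7 9 11 (by omega) (by omega) (by omega) (by omega)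
  obtain ⟨t, ht⟩ := hC.1 (vtx u 8)
  have ht2 : t ∈ nbhd (vtx u 8) ∧ t ∈ C := by simpa [iset, Finset.mem_inter] using ht
  rcases (mA t).mp ht2.1 with rfl|rfl|rfl|rfl|rfl
  · exact f5 ht2.2
  · exact f7 ht2.2
  · exact f8 ht2.2
  · exact f9 ht2.2
  · exact f11 ht2.2

theorem nos3_cond5 {n : ℕ} (C : Finset (ZMod n)) (u : ZMod n) (hn : 17 < n) (hC : IsLocDom C)
    (h : Nat.land (Nat.shiftRight (nos3_W C u) 3) 11368 = 0) : False := by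
  have f6 : vtx u 6 ∉ C := nos3_hnot C u 11368 h 3 (by omega) (by decide)
  have f8 : vtx u 8 ∉ C := nos3_hnot C u 11368 h 5 (by omega) (by decide)
  have f9 : vtx u 9 ∉ C := nos3_hnot C u 11368 h 6 (by omega) (by decide)
  have f13 : vtx u 13 ∉ C := nos3_hnot C u 11368 h 10 (by omega) (by decide)
  have f14 : vtx u 14 ∉ C := nos3_hnot C u 11368 h 11 (by omega) (by decide)
  have f16 : vtx u 16 ∉ C := nos3_hnot C u 11368 h 13 (by omega) (by decide)
  have mA : ∀ t : ZMod n, t ∈ nbhd (vtx u 9) ↔ t = vtx u 6 ∨ t = vtx u 8 ∨ t = vtx u 9 ∨ t = vtx u 10 ∨ t = vtx u 12 := nos3_mem_nbhd C u 9 6 8 10 12 (by omega) (by omega) (by omega) (by omega)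
  have mB : ∀ t : ZMod n, t ∈ nbhd (vtx u 13) ↔ t = vtx u 10 ∨ t = vtx u 12 ∨ t = vtx u 13 ∨ t = vtx u 14 ∨ t = vtx u 16 := nos3_mem_nbhd C u 13 10 12 14 16 (by omega) (by omega) (by omega) (by omega)
  apply hC.2 (vtx u 9) (vtx u 13) f9 f13 (nos3_vne C u hn 9 13 (by omega) (by omega))
  show iset C (vtx u 9) = iset C (vtx u 13)
  apply Finset.ext; intro t
  simp only [iset, Finset.mem_inter]
  rw [mA t, mB t]
  constructor
  · rintro ⟨hd, htC⟩
    refine ⟨?_, htC⟩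
    rcases hd with rfl|rfl|rfl|rfl|rfl
    · exact absurd htC f6
    · exact absurd htC f8
    · exact absurd htC f9
    · exact Or.inl rfl
    · exact Or.inr (Or.inl rfl)
  · rintro ⟨hd, htC⟩
    refine ⟨?_, htC⟩
    rcases hd with rfl|rfl|rfl|rfl|rfl
    · exact Or.inr (Or.inr (Or.inr (Or.inl rfl)))
    · exact Or.inr (Or.inr (Or.inr (Or.inr rfl)))
    · exact absurd htC f13
    · exact absurd htC f14
    · exact absurd htC f16

theorem nos3_cond6 {n : ℕ} (C : Finset (ZMod n)) (u : ZMod n) (hn : 17 < n) (hC : IsLocDom C)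
    (h : Nat.land (Nat.shiftRight (nos3_W C u) 3) 5684 = 0) : False := by
  have f5 : vtx u 5 ∉ C := nos3_hnot C u 5684 h 2 (by omega) (by decide)
  have f7 : vtx u 7 ∉ C := nos3_hnot C u 5684 h 4 (by omega) (by decide)
  have f8 : vtx u 8 ∉ C := nos3_hnot C u 5684 h 5 (by omega) (by decide)
  have f12 : vtx u 12 ∉ C := nos3_hnot C u 5684 h 9 (by omega) (by decide)
  have f13 : vtx u 13 ∉ C := nos3_hnot C u 5684 h 10 (by omega) (by decide)
  have f15 : vtx u 15 ∉ C := nos3_hnot C u 5684 h 12 (by omega) (by decide)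
  have mA : ∀ t : ZMod n, t ∈ nbhd (vtx u 8) ↔ t = vtx u 5 ∨ t = vtx u 7 ∨ t = vtx u 8 ∨ t = vtx u 9 ∨ t = vtx u 11 := nos3_mem_nbhd C u 8 5 7 9 11 (by omega) (by omega) (by omega) (by omega)
  have mB : ∀ t : ZMod n, t ∈ nbhd (vtx u 12) ↔ t = vtx u 9 ∨ t = vtx u 11 ∨ t = vtx u 12 ∨ t = vtx u 13 ∨ t = vtx u 15 := nos3_mem_nbhd C u 12 9 11 13 15 (by omega) (by omega) (by omega) (by omega)
  apply hC.2 (vtx u 8) (vtx u 12) f8 f12 (nos3_vne C u hn 8 12 (by omega) (by omega))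
  show iset C (vtx u 8) = iset C (vtx u 12)
  apply Finset.ext; intro t
  simp only [iset, Finset.mem_inter]
  rw [mA t, mB t]
  constructor
  · rintro ⟨hd, htC⟩
    refine ⟨?_, htC⟩
    rcases hd with rfl|rfl|rfl|rfl|rfl
    · exact absurd htC f5
    · exact absurd htC f7
    · exact absurd htC f8
    · exact Or.inl rfl
    · exact Or.inr (Or.inl rfl)
  · rintro ⟨hd, htC⟩
    refine ⟨?_, htC⟩
    rcases hd with rfl|rfl|rfl|rfl|rfl
    · exact Or.inr (Or.inr (Or.inr (Or.inl rfl)))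
    · exact Or.inr (Or.inr (Or.inr (Or.inr rfl)))
    · exact absurd htC f12
    · exact absurd htC f13
    · exact absurd htC f15

theorem nos3_cond7 {n : ℕ} (C : Finset (ZMod n)) (u : ZMod n) (hn : 17 < n) (hC : IsLocDom C)
    (h : Nat.land (Nat.shiftRight (nos3_W C u) 3) 297 = 0) : False := by
  have f3 : vtx u 3 ∉ C := nos3_hnot C u 297 h 0 (by omega) (by decide)
  have f6 : vtx u 6 ∉ C := nos3_hnot C u 297 h 3 (by omega) (by decide)
  have f8 : vtx u 8 ∉ C := nos3_hnot C u 297 h 5 (by omega) (by decide)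
  have f11 : vtx u 11 ∉ C := nos3_hnot C u 297 h 8 (by omega) (by decide)
  have mA : ∀ t : ZMod n, t ∈ nbhd (vtx u 6) ↔ t = vtx u 3 ∨ t = vtx u 5 ∨ t = vtx u 6 ∨ t = vtx u 7 ∨ t = vtx u 9 := nos3_mem_nbhd C u 6 3 5 7 9 (by omega) (by omega) (by omega) (by omega)
  have mB : ∀ t : ZMod n, t ∈ nbhd (vtx u 8) ↔ t = vtx u 5 ∨ t = vtx u 7 ∨ t = vtx u 8 ∨ t = vtx u 9 ∨ t = vtx u 11 := nos3_mem_nbhd C u 8 5 7 9 11 (by omega) (by omega) (by omega) (by omega)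
  apply hC.2 (vtx u 6) (vtx u 8) f6 f8 (nos3_vne C u hn 6 8 (by omega) (by omega))
  show iset C (vtx u 6) = iset C (vtx u 8)
  apply Finset.ext; intro t
  simp only [iset, Finset.mem_inter]
  rw [mA t, mB t]
  constructor
  · rintro ⟨hd, htC⟩
    refine ⟨?_, htC⟩
    rcases hd with rfl|rfl|rfl|rfl|rfl
    · exact absurd htC f3
    · exact Or.inl rfl
    · exact absurd htC f6
    · exact Or.inr (Or.inl rfl)
    · exact Or.inr (Or.inr (Or.inr (Or.inl rfl)))
  · rintro ⟨hd, htC⟩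
    refine ⟨?_, htC⟩
    rcases hd with rfl|rfl|rfl|rfl|rfl
    · exact Or.inr (Or.inl rfl)
    · exact Or.inr (Or.inr (Or.inr (Or.inl rfl)))
    · exact absurd htC f8
    · exact Or.inr (Or.inr (Or.inr (Or.inr rfl)))
    · exact absurd htC f11

theorem nos3_cond8 {n : ℕ} (C : Finset (ZMod n)) (u : ZMod n) (hn : 17 < n) (hC : IsLocDom C)
    (h : Nat.land (Nat.shiftRight (nos3_W C u) 3) 11834 = 0) : False := by
  have f4 : vtx u 4 ∉ C := nos3_hnot C u 11834 h 1 (by omega) (by decide)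
  have f6 : vtx u 6 ∉ C := nos3_hnot C u 11834 h 3 (by omega) (by decide)
  have f7 : vtx u 7 ∉ C := nos3_hnot C u 11834 h 4 (by omega) (by decide)
  have f8 : vtx u 8 ∉ C := nos3_hnot C u 11834 h 5 (by omega) (by decide)
  have f12 : vtx u 12 ∉ C := nos3_hnot C u 11834 h 9 (by omega) (by decide)
  have f13 : vtx u 13 ∉ C := nos3_hnot C u 11834 h 10 (by omega) (by decide)
  have f14 : vtx u 14 ∉ C := nos3_hnot C u 11834 h 11 (by omega) (by decide)
  have f16 : vtx u 16 ∉ C := nos3_hnot C u 11834 h 13 (by omega) (by decide)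
  have mA : ∀ t : ZMod n, t ∈ nbhd (vtx u 7) ↔ t = vtx u 4 ∨ t = vtx u 6 ∨ t = vtx u 7 ∨ t = vtx u 8 ∨ t = vtx u 10 := nos3_mem_nbhd C u 7 4 6 8 10 (by omega) (by omega) (by omega) (by omega)
  have mB : ∀ t : ZMod n, t ∈ nbhd (vtx u 13) ↔ t = vtx u 10 ∨ t = vtx u 12 ∨ t = vtx u 13 ∨ t = vtx u 14 ∨ t = vtx u 16 := nos3_mem_nbhd C u 13 10 12 14 16 (by omega) (by omega) (by omega) (by omega)
  apply hC.2 (vtx u 7) (vtx u 13) f7 f13 (nos3_vne C u hn 7 13 (by omega) (by omega))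
  show iset C (vtx u 7) = iset C (vtx u 13)
  apply Finset.ext; intro t
  simp only [iset, Finset.mem_inter]
  rw [mA t, mB t]
  constructor
  · rintro ⟨hd, htC⟩
    refine ⟨?_, htC⟩
    rcases hd with rfl|rfl|rfl|rfl|rfl
    · exact absurd htC f4
    · exact absurd htC f6
    · exact absurd htC f7
    · exact absurd htC f8
    · exact Or.inl rfl
  · rintro ⟨hd, htC⟩
    refine ⟨?_, htC⟩
    rcases hd with rfl|rfl|rfl|rfl|rfl
    · exact Or.inr (Or.inr (Or.inr (Or.inr rfl)))
    · exact absurd htC f12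
    · exact absurd htC f13
    · exact absurd htC f14
    · exact absurd htC f16

theorem nos3_cond9 {n : ℕ} (C : Finset (ZMod n)) (u : ZMod n) (hC : IsLocDom C)
    (h : Nat.land (Nat.shiftRight (nos3_W C u) 3) 4080 = 0) : False := by
  have f7 : vtx u 7 ∉ C := nos3_hnot C u 4080 h 4 (by omega) (by decide)
  have f8 : vtx u 8 ∉ C := nos3_hnot C u 4080 h 5 (by omega) (by decide)
  have f9 : vtx u 9 ∉ C := nos3_hnot C u 4080 h 6 (by omega) (by decide)
  have f10 : vtx u 10 ∉ C := nos3_hnot C u 4080 h 7 (by omega) (by decide)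
  have f11 : vtx u 11 ∉ C := nos3_hnot C u 4080 h 8 (by omega) (by decide)
  have f12 : vtx u 12 ∉ C := nos3_hnot C u 4080 h 9 (by omega) (by decide)
  have f13 : vtx u 13 ∉ C := nos3_hnot C u 4080 h 10 (by omega) (by decide)
  have f14 : vtx u 14 ∉ C := nos3_hnot C u 4080 h 11 (by omega) (by decide)
  have mA : ∀ t : ZMod n, t ∈ nbhd (vtx u 10) ↔ t = vtx u 7 ∨ t = vtx u 9 ∨ t = vtx u 10 ∨ t = vtx u 11 ∨ t = vtx u 13 := nos3_mem_nbhd C u 10 7 9 11 13 (by omega) (by omega) (by omega) (by omega)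
  obtain ⟨t, ht⟩ := hC.1 (vtx u 10)
  have ht2 : t ∈ nbhd (vtx u 10) ∧ t ∈ C := by simpa [iset, Finset.mem_inter] using ht
  rcases (mA t).mp ht2.1 with rfl|rfl|rfl|rfl|rfl
  · exact f7 ht2.2
  · exact f9 ht2.2
  · exact f10 ht2.2
  · exact f11 ht2.2
  · exact f13 ht2.2

theorem nos3_cond10 {n : ℕ} (C : Finset (ZMod n)) (u : ZMod n) (hC : IsLocDom C)
    (h : Nat.land (Nat.shiftRight (nos3_W C u) 3) 8160 = 0) : False := by
  have f8 : vtx u 8 ∉ C := nos3_hnot C u 8160 h 5 (by omega) (by decide)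
  have f9 : vtx u 9 ∉ C := nos3_hnot C u 8160 h 6 (by omega) (by decide)
  have f10 : vtx u 10 ∉ C := nos3_hnot C u 8160 h 7 (by omega) (by decide)
  have f11 : vtx u 11 ∉ C := nos3_hnot C u 8160 h 8 (by omega) (by decide)
  have f12 : vtx u 12 ∉ C := nos3_hnot C u 8160 h 9 (by omega) (by decide)
  have f13 : vtx u 13 ∉ C := nos3_hnot C u 8160 h 10 (by omega) (by decide)
  have f14 : vtx u 14 ∉ C := nos3_hnot C u 8160 h 11 (by omega) (by decide)
  have f15 : vtx u 15 ∉ C := nos3_hnot C u 8160 h 12 (by omega) (by decide)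
  have mA : ∀ t : ZMod n, t ∈ nbhd (vtx u 11) ↔ t = vtx u 8 ∨ t = vtx u 10 ∨ t = vtx u 11 ∨ t = vtx u 12 ∨ t = vtx u 14 := nos3_mem_nbhd C u 11 8 10 12 14 (by omega) (by omega) (by omega) (by omega)
  obtain ⟨t, ht⟩ := hC.1 (vtx u 11)
  have ht2 : t ∈ nbhd (vtx u 11) ∧ t ∈ C := by simpa [iset, Finset.mem_inter] using ht
  rcases (mA t).mp ht2.1 with rfl|rfl|rfl|rfl|rfl
  · exact f8 ht2.2
  · exact f10 ht2.2
  · exact f11 ht2.2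
  · exact f12 ht2.2
  · exact f14 ht2.2

theorem nos3_cond11 {n : ℕ} (C : Finset (ZMod n)) (u : ZMod n) (hC : IsLocDom C)
    (h : Nat.land (Nat.shiftRight (nos3_W C u) 3) 2040 = 0) : False := by
  have f6 : vtx u 6 ∉ C := nos3_hnot C u 2040 h 3 (by omega) (by decide)
  have f7 : vtx u 7 ∉ C := nos3_hnot C u 2040 h 4 (by omega) (by decide)
  have f8 : vtx u 8 ∉ C := nos3_hnot C u 2040 h 5 (by omega) (by decide)
  have f9 : vtx u 9 ∉ C := nos3_hnot C u 2040 h 6 (by omega) (by decide)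
  have f10 : vtx u 10 ∉ C := nos3_hnot C u 2040 h 7 (by omega) (by decide)
  have f11 : vtx u 11 ∉ C := nos3_hnot C u 2040 h 8 (by omega) (by decide)
  have f12 : vtx u 12 ∉ C := nos3_hnot C u 2040 h 9 (by omega) (by decide)
  have f13 : vtx u 13 ∉ C := nos3_hnot C u 2040 h 10 (by omega) (by decide)
  have mA : ∀ t : ZMod n, t ∈ nbhd (vtx u 9) ↔ t = vtx u 6 ∨ t = vtx u 8 ∨ t = vtx u 9 ∨ t = vtx u 10 ∨ t = vtx u 12 := nos3_mem_nbhd C u 9 6 8 10 12 (by omega) (by omega) (by omega) (by omega)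
  obtain ⟨t, ht⟩ := hC.1 (vtx u 9)
  have ht2 : t ∈ nbhd (vtx u 9) ∧ t ∈ C := by simpa [iset, Finset.mem_inter] using ht
  rcases (mA t).mp ht2.1 with rfl|rfl|rfl|rfl|rfl
  · exact f6 ht2.2
  · exact f8 ht2.2
  · exact f9 ht2.2
  · exact f10 ht2.2
  · exact f12 ht2.2

theorem nos3_cond12 {n : ℕ} (C : Finset (ZMod n)) (u : ZMod n) (hC : IsLocDom C)
    (h : Nat.land (Nat.shiftRight (nos3_W C u) 3) 6120 = 0) : False := by
  have f6 : vtx u 6 ∉ C := nos3_hnot C u 6120 h 3 (by omega) (by decide)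
  have f8 : vtx u 8 ∉ C := nos3_hnot C u 6120 h 5 (by omega) (by decide)
  have f9 : vtx u 9 ∉ C := nos3_hnot C u 6120 h 6 (by omega) (by decide)
  have f10 : vtx u 10 ∉ C := nos3_hnot C u 6120 h 7 (by omega) (by decide)
  have f11 : vtx u 11 ∉ C := nos3_hnot C u 6120 h 8 (by omega) (by decide)
  have f12 : vtx u 12 ∉ C := nos3_hnot C u 6120 h 9 (by omega) (by decide)
  have f13 : vtx u 13 ∉ C := nos3_hnot C u 6120 h 10 (by omega) (by decide)
  have f15 : vtx u 15 ∉ C := nos3_hnot C u 6120 h 12 (by omega) (by decide)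
  have mA : ∀ t : ZMod n, t ∈ nbhd (vtx u 9) ↔ t = vtx u 6 ∨ t = vtx u 8 ∨ t = vtx u 9 ∨ t = vtx u 10 ∨ t = vtx u 12 := nos3_mem_nbhd C u 9 6 8 10 12 (by omega) (by omega) (by omega) (by omega)
  obtain ⟨t, ht⟩ := hC.1 (vtx u 9)
  have ht2 : t ∈ nbhd (vtx u 9) ∧ t ∈ C := by simpa [iset, Finset.mem_inter] using ht
  rcases (mA t).mp ht2.1 with rfl|rfl|rfl|rfl|rfl
  · exact f6 ht2.2
  · exact f8 ht2.2
  · exact f9 ht2.2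
  · exact f10 ht2.2
  · exact f12 ht2.2

theorem nos3_cond13 {n : ℕ} (C : Finset (ZMod n)) (u : ZMod n) (hn : 17 < n) (hC : IsLocDom C)
    (h : Nat.land (Nat.shiftRight (nos3_W C u) 3) 2842 = 0) : False := by
  have f4 : vtx u 4 ∉ C := nos3_hnot C u 2842 h 1 (by omega) (by decide)
  have f6 : vtx u 6 ∉ C := nos3_hnot C u 2842 h 3 (by omega) (by decide)
  have f7 : vtx u 7 ∉ C := nos3_hnot C u 2842 h 4 (by omega) (by decide)
  have f11 : vtx u 11 ∉ C := nos3_hnot C u 2842 h 8 (by omega) (by decide)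
  have f12 : vtx u 12 ∉ C := nos3_hnot C u 2842 h 9 (by omega) (by decide)
  have f14 : vtx u 14 ∉ C := nos3_hnot C u 2842 h 11 (by omega) (by decide)
  have mA : ∀ t : ZMod n, t ∈ nbhd (vtx u 7) ↔ t = vtx u 4 ∨ t = vtx u 6 ∨ t = vtx u 7 ∨ t = vtx u 8 ∨ t = vtx u 10 := nos3_mem_nbhd C u 7 4 6 8 10 (by omega) (by omega) (by omega) (by omega)
  have mB : ∀ t : ZMod n, t ∈ nbhd (vtx u 11) ↔ t = vtx u 8 ∨ t = vtx u 10 ∨ t = vtx u 11 ∨ t = vtx u 12 ∨ t = vtx u 14 := nos3_mem_nbhd C u 11 8 10 12 14 (by omega) (by omega) (by omega) (by omega)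
  apply hC.2 (vtx u 7) (vtx u 11) f7 f11 (nos3_vne C u hn 7 11 (by omega) (by omega))
  show iset C (vtx u 7) = iset C (vtx u 11)
  apply Finset.ext; intro t
  simp only [iset, Finset.mem_inter]
  rw [mA t, mB t]
  constructor
  · rintro ⟨hd, htC⟩
    refine ⟨?_, htC⟩
    rcases hd with rfl|rfl|rfl|rfl|rfl
    · exact absurd htC f4
    · exact absurd htC f6
    · exact absurd htC f7
    · exact Or.inl rfl
    · exact Or.inr (Or.inl rfl)
  · rintro ⟨hd, htC⟩
    refine ⟨?_, htC⟩
    rcases hd with rfl|rfl|rfl|rfl|rfl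
    · exact Or.inr (Or.inr (Or.inr (Or.inl rfl)))
    · exact Or.inr (Or.inr (Or.inr (Or.inr rfl)))
    · exact absurd htC f11
    · exact absurd htC f12
    · exact absurd htC f14

theorem nos3_cond14 {n : ℕ} (C : Finset (ZMod n)) (u : ZMod n)
    (hS3 : ¬ ∃ w : ZMod n,
      w - 7 ∈ C ∧ w - 6 ∈ C ∧ w - 1 ∈ C ∧ w ∈ C ∧ w + 5 ∈ C ∧ w + 6 ∈ C ∧
      w - 5 ∉ C ∧ w - 4 ∉ C ∧ w - 3 ∉ C ∧ w - 2 ∉ C ∧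
      w + 1 ∉ C ∧ w + 2 ∉ C ∧ w + 3 ∉ C ∧ w + 4 ∉ C)
    (h1 : Nat.land (Nat.shiftRight (nos3_W C u) 3) 12483 = 12483)
    (h : Nat.land (Nat.shiftRight (nos3_W C u) 3) 3900 = 0) : False := by
  have g3 : vtx u 3 ∈ C := nos3_hyes C u 12483 h1 0 (by omega) (by decide)
  have g4 : vtx u 4 ∈ C := nos3_hyes C u 12483 h1 1 (by omega) (by decide)
  have g9 : vtx u 9 ∈ C := nos3_hyes C u 12483 h1 6 (by omega) (by decide)
  have g10 : vtx u 10 ∈ C := nos3_hyes C u 12483 h1 7 (by omega) (by decide)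
  have g15 : vtx u 15 ∈ C := nos3_hyes C u 12483 h1 12 (by omega) (by decide)
  have g16 : vtx u 16 ∈ C := nos3_hyes C u 12483 h1 13 (by omega) (by decide)
  have f5 : vtx u 5 ∉ C := nos3_hnot C u 3900 h 2 (by omega) (by decide)
  have f6 : vtx u 6 ∉ C := nos3_hnot C u 3900 h 3 (by omega) (by decide)
  have f7 : vtx u 7 ∉ C := nos3_hnot C u 3900 h 4 (by omega) (by decide)
  have f8 : vtx u 8 ∉ C := nos3_hnot C u 3900 h 5 (by omega) (by decide)
  have f11 : vtx u 11 ∉ C := nos3_hnot C u 3900 h 8 (by omega) (by decide)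
  have f12 : vtx u 12 ∉ C := nos3_hnot C u 3900 h 9 (by omega) (by decide)
  have f13 : vtx u 13 ∉ C := nos3_hnot C u 3900 h 10 (by omega) (by decide)
  have f14 : vtx u 14 ∉ C := nos3_hnot C u 3900 h 11 (by omega) (by decide)
  apply hS3
  refine ⟨vtx u 10, ?_, ?_, ?_, g10, ?_, ?_, ?_, ?_, ?_, ?_, ?_, ?_, ?_, ?_⟩
  · rw [show vtx u 10 - 7 = vtx u 3 from by unfold vtx; push_cast; ring]; exact g3
  · rw [show vtx u 10 - 6 = vtx u 4 from by unfold vtx; push_cast; ring]; exact g4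
  · rw [show vtx u 10 - 1 = vtx u 9 from by unfold vtx; push_cast; ring]; exact g9
  · rw [show vtx u 10 + 5 = vtx u 15 from by unfold vtx; push_cast; ring]; exact g15
  · rw [show vtx u 10 + 6 = vtx u 16 from by unfold vtx; push_cast; ring]; exact g16
  · rw [show vtx u 10 - 5 = vtx u 5 from by unfold vtx; push_cast; ring]; exact f5
  · rw [show vtx u 10 - 4 = vtx u 6 from by unfold vtx; push_cast; ring]; exact f6
  · rw [show vtx u 10 - 3 = vtx u 7 from by unfold vtx; push_cast; ring]; exact f7
  · rw [show vtx u 10 - 2 = vtx u 8 from by unfold vtx; push_cast; ring]; exact f8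
  · rw [show vtx u 10 + 1 = vtx u 11 from by unfold vtx; push_cast; ring]; exact f11
  · rw [show vtx u 10 + 2 = vtx u 12 from by unfold vtx; push_cast; ring]; exact f12
  · rw [show vtx u 10 + 3 = vtx u 13 from by unfold vtx; push_cast; ring]; exact f13
  · rw [show vtx u 10 + 4 = vtx u 14 from by unfold vtx; push_cast; ring]; exact f14

theorem nos3_violFalse {n : ℕ} (C : Finset (ZMod n)) (u : ZMod n) (hn : 17 < n) (hC : IsLocDom C)
    (hS3 : ¬ ∃ w : ZMod n,
      w - 7 ∈ C ∧ w - 6 ∈ C ∧ w - 1 ∈ C ∧ w ∈ C ∧ w + 5 ∈ C ∧ w + 6 ∈ C ∧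
      w - 5 ∉ C ∧ w - 4 ∉ C ∧ w - 3 ∉ C ∧ w - 2 ∉ C ∧
      w + 1 ∉ C ∧ w + 2 ∉ C ∧ w + 3 ∉ C ∧ w + 4 ∉ C)
    (hv : nos3_viol (Nat.shiftRight (nos3_W C u) 3) = true) : False := by
  simp only [nos3_viol, Bool.or_eq_true, Bool.and_eq_true] at hv
  rcases hv with ((((((((((((((h|h)|h)|h)|h)|h)|h)|h)|h)|h)|h)|h)|h)|h)|h)
  · exact nos3_cond0 C u hn hC (Nat.eq_of_beq_eq_true h)
  · exact nos3_cond1 C u hn hC (Nat.eq_of_beq_eq_true h)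
  · exact nos3_cond2 C u hn hC (Nat.eq_of_beq_eq_true h)
  · exact nos3_cond3 C u hn hC (Nat.eq_of_beq_eq_true h)
  · exact nos3_cond4 C u hC (Nat.eq_of_beq_eq_true h)
  · exact nos3_cond5 C u hn hC (Nat.eq_of_beq_eq_true h)
  · exact nos3_cond6 C u hn hC (Nat.eq_of_beq_eq_true h)
  · exact nos3_cond7 C u hn hC (Nat.eq_of_beq_eq_true h)
  · exact nos3_cond8 C u hn hC (Nat.eq_of_beq_eq_true h)
  · exact nos3_cond9 C u hC (Nat.eq_of_beq_eq_true h)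
  · exact nos3_cond10 C u hC (Nat.eq_of_beq_eq_true h)
  · exact nos3_cond11 C u hC (Nat.eq_of_beq_eq_true h)
  · exact nos3_cond12 C u hC (Nat.eq_of_beq_eq_true h)
  · exact nos3_cond13 C u hn hC (Nat.eq_of_beq_eq_true h)
  · exact nos3_cond14 C u hS3 (Nat.eq_of_beq_eq_true h.1) (Nat.eq_of_beq_eq_true h.2)

/-! ### From the certificate to the counting inequality -/

theorem nos3_srr (x a b : ℕ) :
    Nat.shiftRight (Nat.shiftRight x a) b = Nat.shiftRight x (a+b) := by
  rw [nos3_shr_div, nos3_shr_div, nos3_shr_div, Nat.div_div_eq_div_mul, pow_add]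

theorem nos3_step {n : ℕ} (C : Finset (ZMod n)) (u : ZMod n) (hn : 17 < n) (hC : IsLocDom C)
    (hS3 : ¬ ∃ w : ZMod n,
      w - 7 ∈ C ∧ w - 6 ∈ C ∧ w - 1 ∈ C ∧ w ∈ C ∧ w + 5 ∈ C ∧ w + 6 ∈ C ∧
      w - 5 ∉ C ∧ w - 4 ∉ C ∧ w - 3 ∉ C ∧ w - 2 ∉ C ∧
      w + 1 ∉ C ∧ w + 2 ∉ C ∧ w + 3 ∉ C ∧ w + 4 ∉ C) :
    nos3_psi (Nat.shiftRight (nos3_W C u) 5) + 12 ≤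
      nos3_psi (Nat.land (Nat.shiftRight (nos3_W C u) 4) 4095)
        + 33 * (Nat.land (Nat.shiftRight (nos3_W C u) 8) 1) := by
  have he2 : Nat.shiftRight (nos3_W C u) 3 < 2^14 := by
    rw [nos3_shr_div]
    have := nos3_W_lt C u
    norm_num at this ⊢
    omega
  have hbc := nos3_blockCheck_all (Nat.shiftRight (nos3_W C u) 3) he2
  have hvF : nos3_viol (Nat.shiftRight (nos3_W C u) 3) = false := by
    cases hv : nos3_viol (Nat.shiftRight (nos3_W C u) 3)
    · rfl
    · exact absurd (nos3_violFalse C u hn hC hS3 hv) (fun h => h)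
  rw [nos3_blockCheck, hvF, Bool.or_false] at hbc
  rw [nos3_srr] at hbc
  unfold nos3_ineqE at hbc
  have hle := Nat.le_of_ble_eq_true hbc
  rw [nos3_srr, nos3_srr] at hle
  exact hle

theorem nos3_keyshift {n : ℕ} (C : Finset (ZMod n)) (u : ZMod n) :
    Nat.land (Nat.shiftRight (nos3_W C (u+1)) 4) 4095 = Nat.shiftRight (nos3_W C u) 5 := by
  apply Nat.eq_of_testBit_eq
  intro j
  rw [nos3_tb_land, nos3_tb_shr, nos3_tb_shr]
  by_cases hj : j < 12
  · rw [nos3_W_bit C (u+1) (4+j) (by omega), nos3_W_bit C u (5+j) (by omega)]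
    rw [show Nat.testBit 4095 j = true from by
      rw [show (4095:ℕ) = 2^12-1 from rfl, Nat.testBit_two_pow_sub_one]
      exact decide_eq_true hj]
    rw [Bool.and_true]
    rw [show vtx (u+1) (4+j) = vtx u (5+j) from by unfold vtx; push_cast; ring]
  · rw [show Nat.testBit 4095 j = false from by
      rw [show (4095:ℕ) = 2^12-1 from rfl, Nat.testBit_two_pow_sub_one]
      exact decide_eq_false hj]
    rw [Bool.and_false]
    have hlt : nos3_W C u < 2^(5+j) :=
      lt_of_lt_of_le (nos3_W_lt C u) (Nat.pow_le_pow_right (by omega) (by omega))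
    exact (Nat.testBit_lt_two_pow hlt).symm

theorem nos3_cind {n : ℕ} (C : Finset (ZMod n)) (u : ZMod n) :
    Nat.land (Nat.shiftRight (nos3_W C u) 8) 1 = (if u ∈ C then 1 else 0) := by
  have h8 : Nat.testBit (nos3_W C u) 8 = decide (u ∈ C) := by
    rw [nos3_W_bit C u 8 (by omega), show vtx u 8 = u from by unfold vtx; push_cast; ring]
  have hdm : Nat.testBit (nos3_W C u) 8 = decide (nos3_W C u / 2^8 % 2 = 1) :=
    Nat.testBit_eq_decide_div_mod_eq
  rw [nos3_land_one, nos3_shr_div]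
  by_cases hu : u ∈ C
  · have h1 : decide (nos3_W C u / 2^8 % 2 = 1) = true := by
      rw [← hdm, h8]; exact decide_eq_true hu
    have h2 := of_decide_eq_true h1
    norm_num at h2
    simp [hu, h2]
  · have h1 : decide (nos3_W C u / 2^8 % 2 = 1) = false := by
      rw [← hdm, h8]; exact decide_eq_false hu
    have h2 := of_decide_eq_false h1
    simp only [hu, if_false]
    omega

theorem nos3_total {n : ℕ} (C : Finset (ZMod n)) (hn : 17 < n) (hC : IsLocDom C)
    (hS3 : ¬ ∃ w : ZMod n,
      w - 7 ∈ C ∧ w - 6 ∈ C ∧ w - 1 ∈ C ∧ w ∈ C ∧ w + 5 ∈ C ∧ w + 6 ∈ C ∧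
      w - 5 ∉ C ∧ w - 4 ∉ C ∧ w - 3 ∉ C ∧ w - 2 ∉ C ∧
      w + 1 ∉ C ∧ w + 2 ∉ C ∧ w + 3 ∉ C ∧ w + 4 ∉ C) :
    12 * n ≤ 33 * C.card := by
  haveI : NeZero n := ⟨by omega⟩
  set F : ZMod n → ℕ := fun u => nos3_psi (Nat.land (Nat.shiftRight (nos3_W C u) 4) 4095) with hF
  have hstep : ∀ u : ZMod n, F (u+1) + 12 ≤ F u + 33 * (if u ∈ C then 1 else 0) := by
    intro u
    have h1 := nos3_step C u hn hC hS3
    rw [nos3_cind] at h1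
    have h2 : F (u+1) = nos3_psi (Nat.shiftRight (nos3_W C u) 5) := by
      rw [hF]; exact congrArg nos3_psi (nos3_keyshift C u)
    rw [h2]
    exact h1
  have hsum := Finset.sum_le_sum (s := (Finset.univ : Finset (ZMod n)))
    (fun u _ => hstep u)
  rw [Finset.sum_add_distrib, Finset.sum_add_distrib] at hsum
  have hre : ∑ u : ZMod n, F (u + 1) = ∑ u : ZMod n, F u :=
    Equiv.sum_comp (Equiv.addRight (1 : ZMod n)) F
  rw [hre] at hsum
  have hconst : ∑ _u : ZMod n, (12:ℕ) = n * 12 := by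
    rw [Finset.sum_const, smul_eq_mul, Finset.card_univ, ZMod.card]
  have hmul : ∑ u : ZMod n, 33 * (if u ∈ C then (1:ℕ) else 0)
      = 33 * ∑ u : ZMod n, (if u ∈ C then (1:ℕ) else 0) := by
    rw [Finset.mul_sum]
  have hind : ∑ u : ZMod n, (if u ∈ C then (1:ℕ) else 0) = C.card := by
    rw [Finset.sum_ite_mem, Finset.univ_inter]
    exact (Finset.card_eq_sum_ones C).symm
  rw [hconst, hmul, hind] at hsum
  omega

theorem no_S3_lower_bound (n : ℕ) (hn : 17 < n) (h : n % 6 = 3 ∨ n % 3 = 2)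
    (C : Finset (ZMod n)) (hC : IsLocDom C)
    (hS3 : ¬ ∃ u : ZMod n,
      u - 7 ∈ C ∧ u - 6 ∈ C ∧ u - 1 ∈ C ∧ u ∈ C ∧ u + 5 ∈ C ∧ u + 6 ∈ C ∧
      u - 5 ∉ C ∧ u - 4 ∉ C ∧ u - 3 ∉ C ∧ u - 2 ∉ C ∧
      u + 1 ∉ C ∧ u + 2 ∉ C ∧ u + 3 ∉ C ∧ u + 4 ∉ C) :
    (n + 2) / 3 < C.card := by
  have h33 := nos3_total C hn hC hS3
  have hlt : n + 2 < C.card * 3 := by omega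
  exact (Nat.div_lt_iff_lt_mul (by norm_num)).mpr hlt
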